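/- Let A be a commutative ring graded by an abelian group ι, and let M be a maximal element of the set of proper homogeneous ideals of A (a G-maximal G-ideal). Then: (1) for all homogeneous ideals I, J of A with I·J ⊆ M, either I ⊆ M or J ⊆ M; and (2) M = 𝔪* for some maximal ideal 𝔪 of A; in particular M is G-prime. -/

import Mathlib

/-- A homogeneous ideal `P` of a graded ring `A` is `G`-prime if `P = 𝔭*`
(the homogeneous core) for some prime ideal `𝔭` of `A`. -/
def Ideal.IsGPrime {ι : Type*} [AddCommGroup ι] [DecidableEq ι] {A : Type*} [CommRing A]
    (𝒜 : ι → AddSubgroup A) [GradedRing 𝒜] (P : Ideal A) : Prop :=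
  ∃ 𝔭 : Ideal A, 𝔭.IsPrime ∧ P = (𝔭.homogeneousCore 𝒜).toIdeal

/-- Let `M` be a maximal element of the set of proper homogeneous ideals of a graded ring `A`
(a `G`-maximal `G`-ideal).  Then (1) `M` is `G`-quasi-prime: for homogeneous ideals `I`, `J`
with `I·J ⊆ M`, either `I ⊆ M` or `J ⊆ M`; and (2) `M = 𝔪*` for some maximal ideal `𝔪` of `A`;
in particular `M` is `G`-prime. -/
theorem Ideal.gMaximal_isGPrime {ι : Type*} [AddCommGroup ι] [DecidableEq ι]
    {A : Type*} [CommRing A] (𝒜 : ι → AddSubgroup A) [GradedRing 𝒜]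
    (M : Ideal A) (hMhom : M.IsHomogeneous 𝒜) (hMne : M ≠ ⊤)
    (hMmax : ∀ I : Ideal A, I.IsHomogeneous 𝒜 → I ≠ ⊤ → M ≤ I → I = M) :
    (∀ I J : Ideal A, I.IsHomogeneous 𝒜 → J.IsHomogeneous 𝒜 →
        I * J ≤ M → I ≤ M ∨ J ≤ M) ∧
      (∃ 𝔪 : Ideal A, 𝔪.IsMaximal ∧ M = (𝔪.homogeneousCore 𝒜).toIdeal) ∧
      M.IsGPrime 𝒜 := by
  obtain ⟨𝔪, h𝔪max, hM𝔪⟩ := M.exists_le_maximal hMne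
  have hMle : M ≤ (𝔪.homogeneousCore 𝒜).toIdeal := by
    rw [← hMhom.toIdeal_homogeneousCore_eq_self]
    exact Ideal.homogeneousCore_mono 𝒜 hM𝔪
  have hcore : (𝔪.homogeneousCore 𝒜).toIdeal = M := by
    refine hMmax _ (HomogeneousIdeal.isHomogeneous _) ?_ hMle
    intro h
    exact h𝔪max.ne_top (top_le_iff.mp (h ▸ 𝔪.toIdeal_homogeneousCore_le 𝒜))
  refine ⟨?_, ⟨𝔪, h𝔪max, hcore.symm⟩, ⟨𝔪, h𝔪max.isPrime, hcore.symm⟩⟩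
  intro I J hI hJ hIJ
  by_cases hIM : I ≤ M
  · exact Or.inl hIM
  right
  have hsup : M ⊔ I = ⊤ := by
    by_contra h
    exact hIM ((hMmax _ (hMhom.sup hI) h le_sup_left) ▸ le_sup_right)
  calc J = (M ⊔ I) * J := by rw [hsup, top_mul]
    _ ≤ M * J ⊔ I * J := by rw [sup_mul]
    _ ≤ M := sup_le Ideal.mul_le_left hIJ
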